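/- Over the alphabet A = {a,b} (a ≠ b), the set L₁ = {(aⁿbaᵐ, aᵐbaˢ, aⁿba^{2m}baˢ) : n,m,s > 0} ⊆ U is the behavior of a deterministic splitter with finitely many states, and likewise the set L₂ = {(aⁱbaʲ, aᵏbaⁱ, aᵏba^{2i}baʲ) : i,j,k > 0} ⊆ U is the behavior of a deterministic splitter with finitely many states. -/

import Mathlib

/-- Words over the alphabet `A`, i.e. elements of the free monoid `A*`. -/
abbrev Word (A : Type) := List A

/-- The generating set `G = {(a,ε,a) : a ∈ A} ∪ {(ε,a,a) : a ∈ A}` of the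
Shuffling Monoid. -/
def genG (A : Type) : Set (Word A × Word A × Word A) :=
  {g | ∃ a : A, g = ([a], [], [a]) ∨ g = ([], [a], [a])}

/-- Componentwise product (concatenation) of a list of triples of words. -/
def prodTriple {A : Type} (ls : List (Word A × Word A × Word A)) :
    Word A × Word A × Word A :=
  ((ls.map fun l => l.1).flatten, (ls.map fun l => l.2.1).flatten,
    (ls.map fun l => l.2.2).flatten)

/-- The Shuffling Monoid `U`: the submonoid of `A* × A* × A*` generated by `G`,
described as the set of all products of finite sequences of generators. -/
def shuffleU (A : Type) : Set (Word A × Word A × Word A) :=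
  {m | ∃ ls : List (Word A × Word A × Word A), (∀ l ∈ ls, l ∈ genG A) ∧ prodTriple ls = m}

/-- A spliffer (equivalently, splitter) over `A`: a finite automaton whose
transitions are labeled by elements of `G`. -/
structure Spliffer (A : Type) where
  Q : Type
  finQ : Finite Q
  E : Q → (Word A × Word A × Word A) → Q → Prop
  I : Set Q
  T : Set Q
  labels_mem : ∀ {q l q'}, E q l q' → l ∈ genG A

/-- Paths in a spliffer, recording the sequence of labels. -/
inductive Spliffer.Path {A : Type} (S : Spliffer A) :
    S.Q → List (Word A × Word A × Word A) → S.Q → Prop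
  | nil (q : S.Q) : Spliffer.Path S q [] q
  | cons {q q' q'' : S.Q} {l : Word A × Word A × Word A}
      {ls : List (Word A × Word A × Word A)} :
      S.E q l q' → Spliffer.Path S q' ls q'' → Spliffer.Path S q (l :: ls) q''

/-- The behavior `|S|` of a spliffer: products of the label sequences of all
successful runs. -/
def Spliffer.behavior {A : Type} (S : Spliffer A) : Set (Word A × Word A × Word A) :=
  {m | ∃ q ∈ S.I, ∃ q' ∈ S.T, ∃ ls, S.Path q ls q' ∧ prodTriple ls = m}

/-- A splitter is deterministic if it has a single initial state, for every state
and input letter there is at most one outgoing transition reading that letter,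
and all transitions leaving a given state write to the same tape. -/
def Spliffer.Deterministic {A : Type} (S : Spliffer A) : Prop :=
  (∃! i, i ∈ S.I) ∧
  (∀ ⦃q l₁ q₁ l₂ q₂⦄, S.E q l₁ q₁ → S.E q l₂ q₂ → l₁.2.2 = l₂.2.2 → l₁ = l₂ ∧ q₁ = q₂) ∧
  (∀ ⦃q l₁ q₁ l₂ q₂⦄, S.E q l₁ q₁ → S.E q l₂ q₂ →
    (l₁.1 = [] ∧ l₂.1 = []) ∨ (l₁.2.1 = [] ∧ l₂.2.1 = []))

/-- The set `L₁ = {(aⁿbaᵐ, aᵐbaˢ, aⁿba^{2m}baˢ) : n,m,s > 0}`. -/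
def setL1 {A : Type} (a b : A) : Set (Word A × Word A × Word A) :=
  {x | ∃ n m s : ℕ, 0 < n ∧ 0 < m ∧ 0 < s ∧
    x = (List.replicate n a ++ [b] ++ List.replicate m a,
         List.replicate m a ++ [b] ++ List.replicate s a,
         List.replicate n a ++ [b] ++ List.replicate (2 * m) a ++ [b] ++
           List.replicate s a)}

/-- The set `L₂ = {(aⁱbaʲ, aᵏbaⁱ, aᵏba^{2i}baʲ) : i,j,k > 0}`. -/
def setL2 {A : Type} (a b : A) : Set (Word A × Word A × Word A) :=
  {x | ∃ i j k : ℕ, 0 < i ∧ 0 < j ∧ 0 < k ∧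
    x = (List.replicate i a ++ [b] ++ List.replicate j a,
         List.replicate k a ++ [b] ++ List.replicate i a,
         List.replicate k a ++ [b] ++ List.replicate (2 * i) a ++ [b] ++
           List.replicate j a)}

/-- The set `{(aˢbaˢ, aˢbaˢ, aˢba^{2s}baˢ) : s > 0}`. -/
def setLcap {A : Type} (a b : A) : Set (Word A × Word A × Word A) :=
  {x | ∃ s : ℕ, 0 < s ∧
    x = (List.replicate s a ++ [b] ++ List.replicate s a,
         List.replicate s a ++ [b] ++ List.replicate s a,
         List.replicate s a ++ [b] ++ List.replicate (2 * s) a ++ [b] ++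
           List.replicate s a)}

namespace SplAux

variable {A : Type}

@[simp] lemma prodTriple_nil : prodTriple ([] : List (Word A × Word A × Word A)) = ([], [], []) := rfl

lemma prodTriple_cons (l : Word A × Word A × Word A) (ls) :
    prodTriple (l :: ls) = (l.1 ++ (prodTriple ls).1, l.2.1 ++ (prodTriple ls).2.1,
      l.2.2 ++ (prodTriple ls).2.2) := by
  simp [prodTriple]

lemma prodTriple_append (ls ls' : List (Word A × Word A × Word A)) :
    prodTriple (ls ++ ls') = ((prodTriple ls).1 ++ (prodTriple ls').1,
      (prodTriple ls).2.1 ++ (prodTriple ls').2.1,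
      (prodTriple ls).2.2 ++ (prodTriple ls').2.2) := by
  simp [prodTriple]

lemma path_append {S : Spliffer A} {q q' : S.Q} {ls} (h : S.Path q ls q') :
    ∀ {q'' ls'}, S.Path q' ls' q'' → S.Path q (ls ++ ls') q'' := by
  induction h with
  | nil q => intro _ _ h'; exact h'
  | cons e _ ih => intro _ _ h'; exact .cons e (ih h')

lemma path_single {S : Spliffer A} {q q' : S.Q} {l} (h : S.E q l q') : S.Path q [l] q' :=
  .cons h (.nil _)

lemma path_replicate {S : Spliffer A} {q : S.Q} {l} (h : S.E q l q) (k : ℕ) :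
    S.Path q (List.replicate k l) q := by
  induction k with
  | zero => exact .nil q
  | succ k ih => exact .cons h ih

/-- swap of the first two tapes -/
def swp (x : Word A × Word A × Word A) : Word A × Word A × Word A := (x.2.1, x.1, x.2.2)

@[simp] lemma swp_swp (x : Word A × Word A × Word A) : swp (swp x) = x := rfl

lemma swp_genG {x : Word A × Word A × Word A} (h : x ∈ genG A) : swp x ∈ genG A := by
  obtain ⟨c, h | h⟩ := h
  · exact ⟨c, Or.inr (by simp [swp, h])⟩
  · exact ⟨c, Or.inl (by simp [swp, h])⟩

lemma prodTriple_map_swp (ls : List (Word A × Word A × Word A)) :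
    prodTriple (ls.map swp) = swp (prodTriple ls) := by
  simp only [prodTriple, swp, List.map_map]
  rfl

/-- the spliffer with first two tapes swapped -/
def swS (S : Spliffer A) : Spliffer A where
  Q := S.Q
  finQ := S.finQ
  E q l q' := S.E q (swp l) q'
  I := S.I
  T := S.T
  labels_mem h := by
    have h2 := swp_genG (S.labels_mem h)
    rwa [swp_swp] at h2

lemma path_swS_to {S : Spliffer A} {q q' : (swS S).Q} {ls} (h : (swS S).Path q ls q') :
    S.Path q (ls.map swp) q' := by
  induction h with
  | nil q => exact Spliffer.Path.nil (S := S) q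
  | cons e _ ih => exact .cons e ih

lemma path_swS_of {S : Spliffer A} {q q' : S.Q} {ls} (h : S.Path q ls q') :
    (swS S).Path q (ls.map swp) q' := by
  induction h with
  | nil q => exact Spliffer.Path.nil (S := swS S) q
  | cons e _ ih =>
      exact Spliffer.Path.cons (S := swS S) (show S.E _ (swp (swp _)) _ from e) ih

lemma behavior_swS (S : Spliffer A) :
    (swS S).behavior = {x | swp x ∈ S.behavior} := by
  ext x
  constructor
  · rintro ⟨q, hI, q', hT, ls, hp, rfl⟩
    exact ⟨q, hI, q', hT, ls.map swp, path_swS_to hp, prodTriple_map_swp ls⟩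
  · rintro ⟨q, hI, q', hT, ls, hp, hx⟩
    refine ⟨q, hI, q', hT, ls.map swp, path_swS_of hp, ?_⟩
    rw [prodTriple_map_swp, hx, swp_swp]

lemma det_swS {S : Spliffer A} (h : S.Deterministic) : (swS S).Deterministic := by
  obtain ⟨h1, h2, h3⟩ := h
  refine ⟨h1, ?_, ?_⟩
  · intro q l₁ q₁ l₂ q₂ e₁ e₂ h3rd
    have := h2 e₁ e₂ h3rd
    refine ⟨?_, this.2⟩
    have : swp (swp l₁) = swp (swp l₂) := by rw [this.1]
    simpa using this
  · intro q l₁ q₁ l₂ q₂ e₁ e₂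
    rcases h3 e₁ e₂ with ⟨h₁, h₂⟩ | ⟨h₁, h₂⟩
    · exact Or.inr ⟨h₁, h₂⟩
    · exact Or.inl ⟨h₁, h₂⟩

end SplAux
namespace SplAux

variable {A : Type}

/-- transition relation of the splitter for `L₁` -/
def E1 (a b : A) : Fin 7 → (Word A × Word A × Word A) → Fin 7 → Prop := fun q l q' =>
  (q = 0 ∧ l = ([a], [], [a]) ∧ q' = 1) ∨
  (q = 1 ∧ l = ([a], [], [a]) ∧ q' = 1) ∨
  (q = 1 ∧ l = ([b], [], [b]) ∧ q' = 2) ∨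
  (q = 2 ∧ l = ([], [a], [a]) ∧ q' = 3) ∨
  (q = 3 ∧ l = ([a], [], [a]) ∧ q' = 4) ∨
  (q = 4 ∧ l = ([], [a], [a]) ∧ q' = 3) ∨
  (q = 4 ∧ l = ([], [b], [b]) ∧ q' = 5) ∨
  (q = 5 ∧ l = ([], [a], [a]) ∧ q' = 6) ∨
  (q = 6 ∧ l = ([], [a], [a]) ∧ q' = 6)

/-- the splitter for `L₁` -/
def S1 (a b : A) : Spliffer A where
  Q := Fin 7
  finQ := inferInstance
  E := E1 a b
  I := {0}
  T := {6}
  labels_mem h := by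
    rcases h with ⟨_, rfl, _⟩ | ⟨_, rfl, _⟩ | ⟨_, rfl, _⟩ | ⟨_, rfl, _⟩ | ⟨_, rfl, _⟩ |
      ⟨_, rfl, _⟩ | ⟨_, rfl, _⟩ | ⟨_, rfl, _⟩ | ⟨_, rfl, _⟩
    · exact ⟨a, Or.inl rfl⟩
    · exact ⟨a, Or.inl rfl⟩
    · exact ⟨b, Or.inl rfl⟩
    · exact ⟨a, Or.inr rfl⟩
    · exact ⟨a, Or.inl rfl⟩
    · exact ⟨a, Or.inr rfl⟩
    · exact ⟨b, Or.inr rfl⟩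
    · exact ⟨a, Or.inr rfl⟩
    · exact ⟨a, Or.inr rfl⟩

lemma S1_det {a b : A} (hab : a ≠ b) : (S1 a b).Deterministic := by
  refine ⟨⟨(0 : Fin 7), rfl, fun y hy => hy⟩, ?_, ?_⟩
  · intro q l₁ q₁ l₂ q₂ e₁ e₂ h3
    have e₁' : E1 a b q l₁ q₁ := e₁
    have e₂' : E1 a b q l₂ q₂ := e₂
    unfold E1 at e₁' e₂'
    rcases e₁' with ⟨rfl, rfl, rfl⟩ | ⟨rfl, rfl, rfl⟩ | ⟨rfl, rfl, rfl⟩ | ⟨rfl, rfl, rfl⟩ |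
        ⟨rfl, rfl, rfl⟩ | ⟨rfl, rfl, rfl⟩ | ⟨rfl, rfl, rfl⟩ | ⟨rfl, rfl, rfl⟩ | ⟨rfl, rfl, rfl⟩ <;>
      rcases e₂' with ⟨h, rfl, rfl⟩ | ⟨h, rfl, rfl⟩ | ⟨h, rfl, rfl⟩ | ⟨h, rfl, rfl⟩ |
        ⟨h, rfl, rfl⟩ | ⟨h, rfl, rfl⟩ | ⟨h, rfl, rfl⟩ | ⟨h, rfl, rfl⟩ | ⟨h, rfl, rfl⟩ <;>
      simp_all <;> rfl
  · intro q l₁ q₁ l₂ q₂ e₁ e₂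
    have e₁' : E1 a b q l₁ q₁ := e₁
    have e₂' : E1 a b q l₂ q₂ := e₂
    unfold E1 at e₁' e₂'
    rcases e₁' with ⟨rfl, rfl, rfl⟩ | ⟨rfl, rfl, rfl⟩ | ⟨rfl, rfl, rfl⟩ | ⟨rfl, rfl, rfl⟩ |
        ⟨rfl, rfl, rfl⟩ | ⟨rfl, rfl, rfl⟩ | ⟨rfl, rfl, rfl⟩ | ⟨rfl, rfl, rfl⟩ | ⟨rfl, rfl, rfl⟩ <;>
      rcases e₂' with ⟨h, rfl, rfl⟩ | ⟨h, rfl, rfl⟩ | ⟨h, rfl, rfl⟩ | ⟨h, rfl, rfl⟩ |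
        ⟨h, rfl, rfl⟩ | ⟨h, rfl, rfl⟩ | ⟨h, rfl, rfl⟩ | ⟨h, rfl, rfl⟩ | ⟨h, rfl, rfl⟩ <;>
      simp_all

end SplAux
namespace SplAux

variable {A : Type}

/-- invariant: possible completions from each state to state 6 -/
def inv1 (a b : A) : ℕ → Set (Word A × Word A × Word A)
  | 0 => setL1 a b
  | 1 => {x | ∃ t m s : ℕ, 0 < m ∧ 0 < s ∧
      x = (List.replicate t a ++ [b] ++ List.replicate m a,
           List.replicate m a ++ [b] ++ List.replicate s a,
           List.replicate t a ++ [b] ++ List.replicate (2 * m) a ++ [b] ++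
             List.replicate s a)}
  | 2 => {x | ∃ m s : ℕ, 0 < m ∧ 0 < s ∧
      x = (List.replicate m a,
           List.replicate m a ++ [b] ++ List.replicate s a,
           List.replicate (2 * m) a ++ [b] ++ List.replicate s a)}
  | 3 => {x | ∃ p s : ℕ, 0 < s ∧
      x = (List.replicate (p + 1) a,
           List.replicate p a ++ [b] ++ List.replicate s a,
           List.replicate (2 * p + 1) a ++ [b] ++ List.replicate s a)}
  | 4 => {x | ∃ p s : ℕ, 0 < s ∧
      x = (List.replicate p a,
           List.replicate p a ++ [b] ++ List.replicate s a,
           List.replicate (2 * p) a ++ [b] ++ List.replicate s a)}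
  | 5 => {x | ∃ s : ℕ, 0 < s ∧ x = ([], List.replicate s a, List.replicate s a)}
  | _ => {x | ∃ t : ℕ, x = ([], List.replicate t a, List.replicate t a)}

lemma forward1 (a b : A) {q q' : (S1 a b).Q} {ls} (h : (S1 a b).Path q ls q') (hq' : q' = (6 : Fin 7)) :
    prodTriple ls ∈ inv1 a b q.val := by
  induction h with
  | nil q =>
      subst hq'
      exact ⟨0, rfl⟩
  | cons e p ih =>
      have ih' := ih hq'
      have e' : E1 a b _ _ _ := e
      clear e
      rcases e' with ⟨rfl, rfl, rfl⟩ | ⟨rfl, rfl, rfl⟩ | ⟨rfl, rfl, rfl⟩ | ⟨rfl, rfl, rfl⟩ |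
        ⟨rfl, rfl, rfl⟩ | ⟨rfl, rfl, rfl⟩ | ⟨rfl, rfl, rfl⟩ | ⟨rfl, rfl, rfl⟩ | ⟨rfl, rfl, rfl⟩
      · -- 0 → 1 on ([a],[],[a])
        obtain ⟨t, m, s, hm, hs, hx⟩ := ih'
        exact ⟨t + 1, m, s, Nat.succ_pos t, hm, hs, by
          simp [prodTriple_cons, hx, List.replicate_succ]⟩
      · -- 1 → 1 on ([a],[],[a])
        obtain ⟨t, m, s, hm, hs, hx⟩ := ih'
        exact ⟨t + 1, m, s, hm, hs, by
          simp [prodTriple_cons, hx, List.replicate_succ]⟩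
      · -- 1 → 2 on ([b],[],[b])
        obtain ⟨m, s, hm, hs, hx⟩ := ih'
        exact ⟨0, m, s, hm, hs, by
          simp [prodTriple_cons, hx, List.replicate_succ]⟩
      · -- 2 → 3 on ([],[a],[a])
        obtain ⟨p, s, hs, hx⟩ := ih'
        refine ⟨p + 1, s, Nat.succ_pos p, hs, ?_⟩
        have h2 : 2 * (p + 1) = (2 * p + 1) + 1 := by ring
        simp [prodTriple_cons, hx, h2, List.replicate_succ]
      · -- 3 → 4 on ([a],[],[a])
        obtain ⟨p, s, hs, hx⟩ := ih'
        refine ⟨p, s, hs, ?_⟩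
        simp [prodTriple_cons, hx, List.replicate_succ]
      · -- 4 → 3 on ([],[a],[a])
        obtain ⟨p, s, hs, hx⟩ := ih'
        refine ⟨p + 1, s, hs, ?_⟩
        have h2 : 2 * (p + 1) = (2 * p + 1) + 1 := by ring
        simp [prodTriple_cons, hx, h2, List.replicate_succ]
      · -- 4 → 5 on ([],[b],[b])
        obtain ⟨s, hs, hx⟩ := ih'
        exact ⟨0, s, hs, by simp [prodTriple_cons, hx]⟩
      · -- 5 → 6 on ([],[a],[a])
        obtain ⟨t, hx⟩ := ih'
        exact ⟨t + 1, Nat.succ_pos t, by simp [prodTriple_cons, hx, List.replicate_succ]⟩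
      · -- 6 → 6 on ([],[a],[a])
        obtain ⟨t, hx⟩ := ih'
        exact ⟨t + 1, by simp [prodTriple_cons, hx, List.replicate_succ]⟩

end SplAux
namespace SplAux

variable {A : Type}

/-- label list realizing `(aⁿbaᵐ, aᵐbaˢ, aⁿba^{2m}baˢ)` in `S1` -/
def ls1 (a b : A) (n m s : ℕ) : List (Word A × Word A × Word A) :=
  List.replicate n ([a], [], [a]) ++ [(([b] : Word A), ([] : Word A), ([b] : Word A))] ++
    (List.replicate m [(([] : Word A), ([a] : Word A), ([a] : Word A)),
      (([a] : Word A), ([] : Word A), ([a] : Word A))]).flatten ++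
    [(([] : Word A), ([b] : Word A), ([b] : Word A))] ++
    List.replicate s (([] : Word A), ([a] : Word A), ([a] : Word A))


lemma e01 (a b : A) : E1 a b 0 ([a], [], [a]) 1 := Or.inl ⟨rfl, rfl, rfl⟩
lemma e11 (a b : A) : E1 a b 1 ([a], [], [a]) 1 := Or.inr (Or.inl ⟨rfl, rfl, rfl⟩)
lemma e12 (a b : A) : E1 a b 1 ([b], [], [b]) 2 := Or.inr (Or.inr (Or.inl ⟨rfl, rfl, rfl⟩))
lemma e23 (a b : A) : E1 a b 2 ([], [a], [a]) 3 :=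
  Or.inr (Or.inr (Or.inr (Or.inl ⟨rfl, rfl, rfl⟩)))
lemma e34 (a b : A) : E1 a b 3 ([a], [], [a]) 4 :=
  Or.inr (Or.inr (Or.inr (Or.inr (Or.inl ⟨rfl, rfl, rfl⟩))))
lemma e43 (a b : A) : E1 a b 4 ([], [a], [a]) 3 :=
  Or.inr (Or.inr (Or.inr (Or.inr (Or.inr (Or.inl ⟨rfl, rfl, rfl⟩)))))
lemma e45 (a b : A) : E1 a b 4 ([], [b], [b]) 5 :=
  Or.inr (Or.inr (Or.inr (Or.inr (Or.inr (Or.inr (Or.inl ⟨rfl, rfl, rfl⟩))))))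
lemma e56 (a b : A) : E1 a b 5 ([], [a], [a]) 6 :=
  Or.inr (Or.inr (Or.inr (Or.inr (Or.inr (Or.inr (Or.inr (Or.inl ⟨rfl, rfl, rfl⟩)))))))
lemma e66 (a b : A) : E1 a b 6 ([], [a], [a]) 6 :=
  Or.inr (Or.inr (Or.inr (Or.inr (Or.inr (Or.inr (Or.inr (Or.inr ⟨rfl, rfl, rfl⟩)))))))

lemma loop34 (a b : A) (k : ℕ) :
    (S1 a b).Path (4 : Fin 7)
      ((List.replicate k [(([] : Word A), ([a] : Word A), ([a] : Word A)),
        (([a] : Word A), ([] : Word A), ([a] : Word A))]).flatten) (4 : Fin 7) := by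
  induction k with
  | zero => exact .nil _
  | succ k ih =>
      rw [List.replicate_succ, List.flatten_cons]
      refine Spliffer.Path.cons (e43 a b) ?_
      exact Spliffer.Path.cons (e34 a b) ih

lemma path_ls1 (a b : A) {n m s : ℕ} (hn : 0 < n) (hm : 0 < m) (hs : 0 < s) :
    (S1 a b).Path (0 : Fin 7) (ls1 a b n m s) (6 : Fin 7) := by
  obtain ⟨n, rfl⟩ := Nat.exists_eq_succ_of_ne_zero hn.ne'
  obtain ⟨m, rfl⟩ := Nat.exists_eq_succ_of_ne_zero hm.ne'
  obtain ⟨s, rfl⟩ := Nat.exists_eq_succ_of_ne_zero hs.ne'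
  unfold ls1
  refine path_append (q' := (5 : Fin 7))
    (path_append (q' := (4 : Fin 7))
      (path_append (q' := (2 : Fin 7))
        (path_append (q' := (1 : Fin 7)) ?_ ?_) ?_) ?_) ?_
  · -- 0 →(aⁿ)→ 1
    rw [List.replicate_succ]
    exact Spliffer.Path.cons (show (S1 a b).E (0 : Fin 7) ([a], [], [a]) (1 : Fin 7) from e01 a b)
      (path_replicate (e11 a b) n)
  · exact path_single (e12 a b)
  · -- 2 →(pairs)→ 4
    rw [List.replicate_succ, List.flatten_cons]
    refine Spliffer.Path.cons (e23 a b) ?_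
    exact Spliffer.Path.cons (e34 a b) (loop34 a b m)
  · exact path_single (e45 a b)
  · rw [List.replicate_succ]
    exact Spliffer.Path.cons (e56 a b)
      (path_replicate (e66 a b) s)

lemma prodTriple_replicate_fst (a : A) (n : ℕ) :
    prodTriple (List.replicate n (([a], ([] : Word A), [a]))) =
      (List.replicate n a, [], List.replicate n a) := by
  induction n with
  | zero => rfl
  | succ n ih => simp [List.replicate_succ, prodTriple_cons, ih]

lemma prodTriple_replicate_snd (a : A) (n : ℕ) :
    prodTriple (List.replicate n ((([] : Word A), [a], [a]))) =
      ([], List.replicate n a, List.replicate n a) := by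
  induction n with
  | zero => rfl
  | succ n ih => simp [List.replicate_succ, prodTriple_cons, ih]

lemma prodTriple_mid (a : A) (m : ℕ) :
    prodTriple ((List.replicate m [(([] : Word A), ([a] : Word A), ([a] : Word A)),
        (([a] : Word A), ([] : Word A), ([a] : Word A))]).flatten) =
      (List.replicate m a, List.replicate m a, List.replicate (2 * m) a) := by
  induction m with
  | zero => rfl
  | succ m ih =>
      rw [List.replicate_succ, List.flatten_cons]
      have h2 : 2 * (m + 1) = (2 * m + 1) + 1 := by ring
      simp [prodTriple_cons, List.cons_append, ih, h2, List.replicate_succ]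

lemma prod_ls1 (a b : A) (n m s : ℕ) :
    prodTriple (ls1 a b n m s) =
      (List.replicate n a ++ [b] ++ List.replicate m a,
       List.replicate m a ++ [b] ++ List.replicate s a,
       List.replicate n a ++ [b] ++ List.replicate (2 * m) a ++ [b] ++
         List.replicate s a) := by
  unfold ls1
  rw [prodTriple_append, prodTriple_append, prodTriple_append, prodTriple_append,
    prodTriple_replicate_fst, prodTriple_replicate_snd, prodTriple_mid]
  simp [prodTriple_cons, prodTriple]

lemma behavior_S1 (a b : A) : (S1 a b).behavior = setL1 a b := by
  ext x
  constructor
  · rintro ⟨q, hqI, q', hq'T, ls, hpath, rfl⟩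
    have hq : q = (0 : Fin 7) := hqI
    have hq' : q' = (6 : Fin 7) := hq'T
    subst hq
    exact forward1 a b hpath hq'
  · rintro ⟨n, m, s, hn, hm, hs, rfl⟩
    exact ⟨(0 : Fin 7), rfl, (6 : Fin 7), rfl, ls1 a b n m s, path_ls1 a b hn hm hs,
      prod_ls1 a b n m s⟩

end SplAux
namespace SplAux

variable {A : Type}

lemma setL2_eq (a b : A) : setL2 a b = {x | swp x ∈ setL1 a b} := by
  ext x
  constructor
  · rintro ⟨i, j, k, hi, hj, hk, rfl⟩
    exact ⟨k, i, j, hk, hi, hj, rfl⟩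
  · rintro ⟨n, m, s, hn, hm, hs, hx⟩
    refine ⟨m, s, n, hm, hs, hn, ?_⟩
    have : x = swp (swp x) := rfl
    rw [this, hx]
    rfl

end SplAux

/-- over `A = {a,b}`, each of `L₁` and `L₂` is the behavior of a
deterministic splitter with finitely many states. -/
theorem L1_and_L2_are_deterministic_behaviors {A : Type} (a b : A) (hab : a ≠ b)
    (hA : ∀ x : A, x = a ∨ x = b) :
    (∃ S : Spliffer A, S.Deterministic ∧ S.behavior = setL1 a b) ∧
    (∃ S : Spliffer A, S.Deterministic ∧ S.behavior = setL2 a b) := by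
  constructor
  · exact ⟨SplAux.S1 a b, SplAux.S1_det hab, SplAux.behavior_S1 a b⟩
  · refine ⟨SplAux.swS (SplAux.S1 a b), SplAux.det_swS (SplAux.S1_det hab), ?_⟩
    rw [SplAux.behavior_swS, SplAux.behavior_S1, SplAux.setL2_eq]
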